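/- (Theorem 1) Let P = {x ∈ ℝⁿ : Ax = b, Bx ≤ d} and c ∈ ℝⁿ. Suppose the set of steepness values of circuits, S = {cᵀg/‖Bg‖₁ : g a circuit of P}, is finite. Let x₀, x₁, …, x_k ∈ P be a sequence of steepest-descent augmentations: for each i < k there exists y_i that is a steepest-descent augmenting direction at x_i (strictly feasible at x_i, By_i ≠ 0, minimizing cᵀy/‖By‖₁ over all strictly feasible y at x_i with By ≠ 0) with cᵀy_i < 0, and x_{i+1} = x_i + α_i y_i where α_i > 0 is maximal (x_i + αy_i ∉ P for all α > α_i). Then k ≤ dim(P) · |S|, where dim(P) is the dimension of the affine hull of P. -/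

import Mathlib

open Finset Matrix

/-- `y` is strictly feasible at `x₀` with respect to the set `P`. -/
def StrictlyFeasible {n : ℕ} (P : Set (Fin n → ℝ)) (x₀ y : Fin n → ℝ) : Prop :=
  ∃ α : ℝ, 0 < α ∧ x₀ + α • y ∈ P

/-- `y` is a steepest-descent augmenting direction at `x₀` with respect to `P`, `B`, `c`. -/
def IsSteepestDescentDirection {n mB : ℕ} (P : Set (Fin n → ℝ))
    (B : Matrix (Fin mB) (Fin n) ℝ) (c : Fin n → ℝ) (x₀ y : Fin n → ℝ) : Prop :=
  StrictlyFeasible P x₀ y ∧ B.mulVec y ≠ 0 ∧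
    ∀ z : Fin n → ℝ, StrictlyFeasible P x₀ z → B.mulVec z ≠ 0 →
      c ⬝ᵥ y / (∑ i, |B.mulVec y i|) ≤ c ⬝ᵥ z / (∑ i, |B.mulVec z i|)

/-- `g` is a circuit of the polyhedron `{x : A x = b, B x ≤ d}`: it lies in `ker A`, has
`B g ≠ 0`, and the support of `B g` is inclusion-minimal among the supports of `B x` over
all nonzero `x ∈ ker A` (with `B x ≠ 0`). -/
def IsCircuit {n mA mB : ℕ} (A : Matrix (Fin mA) (Fin n) ℝ)
    (B : Matrix (Fin mB) (Fin n) ℝ) (g : Fin n → ℝ) : Prop :=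
  A.mulVec g = 0 ∧ B.mulVec g ≠ 0 ∧
    ∀ x : Fin n → ℝ, A.mulVec x = 0 → B.mulVec x ≠ 0 →
      {i | B.mulVec x i ≠ 0} ⊆ {i | B.mulVec g i ≠ 0} →
      {i | B.mulVec x i ≠ 0} = {i | B.mulVec g i ≠ 0}

lemma noCancel {ι : Type*} (s : Finset ι) (a : ι → ℝ)
    (h : ∑ i ∈ s, |a i| ≤ |∑ i ∈ s, a i|) {p q : ι} (hp : p ∈ s) (hq : q ∈ s)
    (hap : 0 < a p) : 0 ≤ a q := by
  by_contra hq0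
  push_neg at hq0
  have h1 : ∑ i ∈ s, a i ≤ ∑ i ∈ s, |a i| - (|a q| - a q) := by
    have e : ∑ i ∈ s, a i = ∑ i ∈ s, |a i| - ∑ i ∈ s, (|a i| - a i) := by
      rw [Finset.sum_sub_distrib]; ring
    have hle : |a q| - a q ≤ ∑ i ∈ s, (|a i| - a i) :=
      Finset.single_le_sum (f := fun i => |a i| - a i)
        (fun i _ => by have := le_abs_self (a i); linarith) hq
    linarith
  have h2 : -(∑ i ∈ s, a i) ≤ ∑ i ∈ s, |a i| - (|a p| + a p) := by
    have e : -∑ i ∈ s, a i = ∑ i ∈ s, |a i| - ∑ i ∈ s, (|a i| + a i) := by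
      rw [Finset.sum_add_distrib]; ring
    have hle : |a p| + a p ≤ ∑ i ∈ s, (|a i| + a i) :=
      Finset.single_le_sum (f := fun i => |a i| + a i)
        (fun i _ => by have := neg_abs_le (a i); linarith) hp
    linarith
  have hq1 : 0 < |a q| - a q := by have := abs_nonneg (a q); linarith
  have hp1 : 0 < |a p| + a p := by have := abs_nonneg (a p); linarith
  rcases abs_le.mp (le_refl |∑ i ∈ s, a i|) with ⟨hl, hr⟩
  rcases le_or_gt 0 (∑ i ∈ s, a i) with hc | hc
  · rw [abs_of_nonneg hc] at h; linarith
  · rw [abs_of_neg hc] at h; linarith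

/-- sign-compatibility -/
def Conf {m : ℕ} (w u : Fin m → ℝ) : Prop := ∀ i, w i ≠ 0 → 0 < w i * u i

lemma conf_self {m : ℕ} (u : Fin m → ℝ) : Conf u u := fun i hi => mul_self_pos.mpr hi

lemma conf_trans {m : ℕ} {a b c : Fin m → ℝ} (h1 : Conf a b) (h2 : Conf b c) : Conf a c := by
  intro i hi
  have hb : b i ≠ 0 := by
    intro h0; have := h1 i hi; rw [h0, mul_zero] at this; exact lt_irrefl _ this
  have p1 := h1 i hi
  have p2 := h2 i hb
  nlinarith [sq_nonneg (b i)]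

lemma sign_aux {r t zi : ℝ} (hr : r ≠ 0) (hzi : zi ≠ 0) (ht : |t| ≤ |r|) (hne : r - t ≠ 0) :
    0 < ((r - t) * zi) * (r * zi) := by
  have hz2 : 0 < zi * zi := mul_self_pos.mpr hzi
  have key : 0 < (r - t) * r := by
    rcases hr.lt_or_gt with hneg | hpos
    · have : r ≤ t := by
        have h1 : -|r| ≤ t := neg_le_of_abs_le ht
        have : -|r| = r := by rw [abs_of_neg hneg]; ring
        linarith
      have : r - t < 0 := by rcases lt_or_eq_of_le this with h | h; · linarith
                             · exact absurd (by linarith : r - t = 0) hne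
      exact mul_pos_of_neg_of_neg this hneg
    · have : t ≤ r := by
        have h1 : t ≤ |r| := le_of_abs_le ht
        rw [abs_of_pos hpos] at h1; exact h1
      have : 0 < r - t := by rcases lt_or_eq_of_le this with h | h; · linarith
                             · exact absurd (by linarith : r - t = 0) hne
      exact mul_pos this hpos
  nlinarith

/-- Reduction step: subtract a multiple of a smaller-support vector, staying conformal. -/
lemma reduce {m : ℕ} (w z : Fin m → ℝ) (hz : z ≠ 0)
    (hsub : ∀ i, z i ≠ 0 → w i ≠ 0) :
    ∃ t : ℝ, Conf (w - t • z) w ∧ (∃ i1, w i1 ≠ 0 ∧ (w - t • z) i1 = 0) := by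
  obtain ⟨j, hj⟩ := Function.ne_iff.mp hz
  have hFne : (Finset.univ.filter (fun i => z i ≠ 0)).Nonempty :=
    ⟨j, by simpa using hj⟩
  obtain ⟨i1, hi1mem, hi1min⟩ := Finset.exists_min_image _ (fun i => |w i / z i|) hFne
  have hi1z : z i1 ≠ 0 := (Finset.mem_filter.mp hi1mem).2
  refine ⟨w i1 / z i1, ?_, ⟨i1, hsub i1 hi1z, by
    simp only [Pi.sub_apply, Pi.smul_apply, smul_eq_mul]
    field_simp
    ring⟩⟩
  intro i hi
  simp only [Pi.sub_apply, Pi.smul_apply, smul_eq_mul] at hi ⊢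
  by_cases hzi : z i = 0
  · rw [hzi, mul_zero, sub_zero] at hi ⊢; exact mul_self_pos.mpr hi
  · have hwi : w i ≠ 0 := hsub i hzi
    have hmin := hi1min i (Finset.mem_filter.mpr ⟨Finset.mem_univ i, hzi⟩)
    set r := w i / z i with hr
    set t := w i1 / z i1 with htdef
    have hwir : w i = r * z i := by rw [hr]; field_simp
    have hne : r - t ≠ 0 := by
      intro h0
      apply hi
      rw [hwir]
      have : r = t := by linarith
      rw [this]; ring
    have hrne : r ≠ 0 := by rw [hr]; exact div_ne_zero hwi hzi
    have := sign_aux hrne hzi hmin hne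
    calc (0:ℝ) < ((r - t) * z i) * (r * z i) := this
    _ = (w i - t * z i) * w i := by rw [hwir]; ring

lemma exists_conformal_circuit {n mA mB : ℕ} (A : Matrix (Fin mA) (Fin n) ℝ)
    (B : Matrix (Fin mB) (Fin n) ℝ) :
    ∀ N : ℕ, ∀ u : Fin mB → ℝ,
      (Finset.univ.filter (fun i => u i ≠ 0)).card ≤ N →
      (∃ yy, A.mulVec yy = 0 ∧ B.mulVec yy = u) → u ≠ 0 →
      ∃ g, IsCircuit A B g ∧ Conf (B.mulVec g) u := by
  intro N
  induction N with
  | zero =>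
    intro u hcard _ hu
    exfalso
    apply hu
    funext i
    by_contra hui
    have : i ∈ Finset.univ.filter (fun i => u i ≠ 0) := by simpa using hui
    have := Finset.card_pos.mpr ⟨i, this⟩
    omega
  | succ N ih =>
    rintro u hcard ⟨yy, hAyy, hByy⟩ hu
    by_cases hc : IsCircuit A B yy
    · exact ⟨yy, hc, by rw [hByy]; exact conf_self u⟩
    · have hc' : ¬ ∀ x : Fin n → ℝ, A.mulVec x = 0 → B.mulVec x ≠ 0 →
          {i | B.mulVec x i ≠ 0} ⊆ {i | B.mulVec yy i ≠ 0} →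
          {i | B.mulVec x i ≠ 0} = {i | B.mulVec yy i ≠ 0} :=
        fun h => hc ⟨hAyy, by rw [hByy]; exact hu, h⟩
      push_neg at hc'
      obtain ⟨xv, hAx, hBx, hsubset, hneq⟩ := hc'
      set z := B.mulVec xv with hzdef
      have hsub : ∀ i, z i ≠ 0 → u i ≠ 0 := by
        intro i hzi
        have : i ∈ {i | B.mulVec yy i ≠ 0} := hsubset hzi
        rwa [hByy] at this
      obtain ⟨t, hconf, i1, hi1u, hi1z⟩ := reduce u z hBx hsub
      set u' := u - t • z with hu'def
      -- u' ≠ 0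
      have hu' : u' ≠ 0 := by
        intro h0
        apply hneq
        have ht : t ≠ 0 := by
          intro ht0
          apply hu
          have : u - (0:ℝ) • z = 0 := by rw [← ht0]; exact h0
          simpa using this
        have heq : ∀ i, u i = t * z i := by
          intro i
          have := congrFun h0 i
          rw [hu'def] at this
          simp only [Pi.sub_apply, Pi.smul_apply, smul_eq_mul, Pi.zero_apply] at this
          linarith
        rw [hByy]
        ext i
        simp only [Set.mem_setOf_eq]
        rw [heq i]
        constructor
        · exact fun h => mul_ne_zero ht h
        · intro h h0; exact h (by rw [h0, mul_zero])
      have hsub' : ∀ i, u' i ≠ 0 → u i ≠ 0 := by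
        intro i hi
        intro h0
        have := hconf i hi
        rw [h0, mul_zero] at this
        exact lt_irrefl _ this
      have hcard' : (Finset.univ.filter (fun i => u' i ≠ 0)).card ≤ N := by
        have hss : Finset.univ.filter (fun i => u' i ≠ 0) ⊂
            Finset.univ.filter (fun i => u i ≠ 0) := by
          constructor
          · intro i hi
            simp only [Finset.mem_filter, Finset.mem_univ, true_and] at hi ⊢
            exact hsub' i hi
          · intro hcon
            have : i1 ∈ Finset.univ.filter (fun i => u' i ≠ 0) :=
              hcon (by simpa using hi1u)
            simp only [Finset.mem_filter, Finset.mem_univ, true_and] at this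
            exact this hi1z
        have := Finset.card_lt_card hss
        omega
      have : ∃ yy2, A.mulVec yy2 = 0 ∧ B.mulVec yy2 = u' := by
        refine ⟨yy - t • xv, ?_, ?_⟩
        · rw [Matrix.mulVec_sub, Matrix.mulVec_smul, hAyy, hAx]; simp
        · rw [Matrix.mulVec_sub, Matrix.mulVec_smul, hByy]
      obtain ⟨g, hg, hgconf⟩ := ih u' hcard' this hu'
      exact ⟨g, hg, conf_trans hgconf hconf⟩

lemma div_pos_of_mul_pos' {a b : ℝ} (h : 0 < a * b) : 0 < b / a := by
  rcases lt_trichotomy a 0 with ha | ha | ha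
  · have hb : b < 0 := by nlinarith
    exact div_pos_of_neg_of_neg hb ha
  · rw [ha, zero_mul] at h; exact absurd h (lt_irrefl 0)
  · have hb : 0 < b := by nlinarith
    exact div_pos hb ha

lemma exists_decomposition {n mA mB : ℕ} (A : Matrix (Fin mA) (Fin n) ℝ)
    (B : Matrix (Fin mB) (Fin n) ℝ) :
    ∀ N : ℕ, ∀ u : Fin mB → ℝ,
      (Finset.univ.filter (fun i => u i ≠ 0)).card ≤ N →
      (∃ yy, A.mulVec yy = 0 ∧ B.mulVec yy = u) →
      ∃ l : List (ℝ × (Fin n → ℝ)),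
        (∀ p ∈ l, 0 < p.1 ∧ IsCircuit A B p.2 ∧ Conf (B.mulVec p.2) u) ∧
        u = (l.map (fun p => p.1 • B.mulVec p.2)).sum := by
  intro N
  induction N with
  | zero =>
    intro u hcard _
    have hu : u = 0 := by
      funext i
      by_contra hui
      have : i ∈ Finset.univ.filter (fun i => u i ≠ 0) := by simpa using hui
      have := Finset.card_pos.mpr ⟨i, this⟩
      omega
    exact ⟨[], by simp, by simp [hu]⟩
  | succ N ih =>
    rintro u hcard hV
    by_cases hu : u = 0
    · exact ⟨[], by simp, by simp [hu]⟩
    obtain ⟨g, hgc, hgconf⟩ :=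
      exists_conformal_circuit A B (N+1) u hcard hV hu
    set w := B.mulVec g with hwdef
    have hw0 : w ≠ 0 := hgc.2.1
    obtain ⟨j, hj⟩ := Function.ne_iff.mp hw0
    have hFne : (Finset.univ.filter (fun i => w i ≠ 0)).Nonempty := ⟨j, by simpa using hj⟩
    obtain ⟨i1, hi1mem, hi1min⟩ := Finset.exists_min_image _ (fun i => u i / w i) hFne
    have hi1w : w i1 ≠ 0 := (Finset.mem_filter.mp hi1mem).2
    set t := u i1 / w i1 with htdef
    have ht : 0 < t := div_pos_of_mul_pos' (hgconf i1 hi1w)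
    set u' := u - t • w with hu'def
    have hconf' : Conf u' u := by
      intro i hi
      rw [hu'def] at hi ⊢
      simp only [Pi.sub_apply, Pi.smul_apply, smul_eq_mul] at hi ⊢
      by_cases hwi : w i = 0
      · rw [hwi, mul_zero, sub_zero] at hi ⊢; exact mul_self_pos.mpr hi
      · have hmin := hi1min i (Finset.mem_filter.mpr ⟨Finset.mem_univ i, hwi⟩)
        have hcwu := hgconf i hwi
        rcases Ne.lt_or_gt hwi with hwn | hwp
        · have hun : u i < 0 := by nlinarith
          have : u i ≤ t * w i := by
            have : t ≤ u i / w i := hmin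
            calc u i = (u i / w i) * w i := by field_simp
            _ ≤ t * w i := by exact mul_le_mul_of_nonpos_right this (le_of_lt hwn)
          have hle : u i - t * w i ≤ 0 := by linarith
          have : u i - t * w i < 0 := lt_of_le_of_ne hle hi
          nlinarith
        · have hup : 0 < u i := by nlinarith
          have : t * w i ≤ u i := by
            have h1 : t ≤ u i / w i := hmin
            calc t * w i ≤ (u i / w i) * w i := by
                  exact mul_le_mul_of_nonneg_right h1 (le_of_lt hwp)
            _ = u i := by field_simp
          have hle : 0 ≤ u i - t * w i := by linarith
          have : 0 < u i - t * w i := lt_of_le_of_ne hle (Ne.symm hi)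
          nlinarith
    have hcard' : (Finset.univ.filter (fun i => u' i ≠ 0)).card ≤ N := by
      have hss : Finset.univ.filter (fun i => u' i ≠ 0) ⊂
          Finset.univ.filter (fun i => u i ≠ 0) := by
        constructor
        · intro i hi
          simp only [Finset.mem_filter, Finset.mem_univ, true_and] at hi ⊢
          intro h0
          have := hconf' i hi
          rw [h0, mul_zero] at this
          exact lt_irrefl _ this
        · intro hcon
          have hu1 : u i1 ≠ 0 := by
            intro h0
            have := hgconf i1 hi1w
            rw [h0, mul_zero] at this
            exact lt_irrefl _ this
          have : i1 ∈ Finset.univ.filter (fun i => u' i ≠ 0) := hcon (by simpa using hu1)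
          simp only [Finset.mem_filter, Finset.mem_univ, true_and] at this
          apply this
          rw [hu'def]
          simp only [Pi.sub_apply, Pi.smul_apply, smul_eq_mul, htdef]
          field_simp
          ring
      have := Finset.card_lt_card hss
      omega
    have hV' : ∃ yy, A.mulVec yy = 0 ∧ B.mulVec yy = u' := by
      obtain ⟨yy, hAyy, hByy⟩ := hV
      refine ⟨yy - t • g, ?_, ?_⟩
      · rw [Matrix.mulVec_sub, Matrix.mulVec_smul, hAyy, hgc.1]; simp
      · rw [Matrix.mulVec_sub, Matrix.mulVec_smul, hByy, ← hwdef, hu'def]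
    obtain ⟨l', hl'mem, hl'sum⟩ := ih u' hcard' hV'
    refine ⟨(t, g) :: l', ?_, ?_⟩
    · rintro p hp
      rcases List.mem_cons.mp hp with h | h
      · rw [h]; exact ⟨ht, hgc, hgconf⟩
      · obtain ⟨h1, h2, h3⟩ := hl'mem p h
        exact ⟨h1, h2, conf_trans h3 hconf'⟩
    · simp only [List.map_cons, List.sum_cons, ← hl'sum, ← hwdef]
      rw [hu'def]
      abel

lemma sum_abs_pos' {m : ℕ} {u : Fin m → ℝ} (hu : u ≠ 0) : 0 < ∑ i, |u i| := by
  obtain ⟨j, hj⟩ := Function.ne_iff.mp hu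
  have h1 : 0 < |u j| := abs_pos.mpr hj
  have h2 : ∀ i ∈ Finset.univ, (0:ℝ) ≤ |u i| := fun i _ => abs_nonneg _
  exact lt_of_lt_of_le h1 (Finset.single_le_sum h2 (Finset.mem_univ j))

lemma convex_poly {n mA mB : ℕ} {A : Matrix (Fin mA) (Fin n) ℝ} {B : Matrix (Fin mB) (Fin n) ℝ}
    {b : Fin mA → ℝ} {d : Fin mB → ℝ} :
    Convex ℝ {x : Fin n → ℝ | A.mulVec x = b ∧ ∀ i, B.mulVec x i ≤ d i} := by
  rintro u ⟨hu1, hu2⟩ v ⟨hv1, hv2⟩ s t hs ht hst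
  constructor
  · rw [Matrix.mulVec_add, Matrix.mulVec_smul, Matrix.mulVec_smul, hu1, hv1]
    funext i
    simp only [Pi.add_apply, Pi.smul_apply, smul_eq_mul]
    calc s * b i + t * b i = (s + t) * b i := by ring
    _ = b i := by rw [hst]; ring
  · intro i
    rw [Matrix.mulVec_add, Matrix.mulVec_smul, Matrix.mulVec_smul]
    simp only [Pi.add_apply, Pi.smul_apply, smul_eq_mul]
    have h1 := mul_le_mul_of_nonneg_left (hu2 i) hs
    have h2 := mul_le_mul_of_nonneg_left (hv2 i) ht
    have h3 : s * d i + t * d i = (s + t) * d i := by ring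
    rw [hst, one_mul] at h3
    linarith

/-- If the strict B-rows of `g` have slack at `x₀`, a small positive step stays feasible. -/
lemma feas_helper {n mA mB : ℕ} {A : Matrix (Fin mA) (Fin n) ℝ} {B : Matrix (Fin mB) (Fin n) ℝ}
    {b : Fin mA → ℝ} {d : Fin mB → ℝ} {x₀ g : Fin n → ℝ}
    (hx1 : A.mulVec x₀ = b) (hx2 : ∀ i, B.mulVec x₀ i ≤ d i)
    (hg : A.mulVec g = 0)
    (hslack : ∀ m, 0 < B.mulVec g m → B.mulVec x₀ m < d m) :
    ∃ ε : ℝ, 0 < ε ∧ A.mulVec (x₀ + ε • g) = b ∧ ∀ i, B.mulVec (x₀ + ε • g) i ≤ d i := by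
  classical
  set F := Finset.univ.filter (fun m => 0 < B.mulVec g m) with hF
  have key : ∀ ε : ℝ, 0 < ε → (∀ m ∈ F, ε ≤ (d m - B.mulVec x₀ m) / B.mulVec g m) →
      A.mulVec (x₀ + ε • g) = b ∧ ∀ i, B.mulVec (x₀ + ε • g) i ≤ d i := by
    intro ε hε hεle
    constructor
    · rw [Matrix.mulVec_add, Matrix.mulVec_smul, hx1, hg]; simp
    · intro i
      rw [Matrix.mulVec_add, Matrix.mulVec_smul]
      simp only [Pi.add_apply, Pi.smul_apply, smul_eq_mul]
      by_cases hi : 0 < B.mulVec g i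
      · have hmem : i ∈ F := by simp [hF, hi]
        have := hεle i hmem
        have hgi := hi
        have : ε * B.mulVec g i ≤ d i - B.mulVec x₀ i := by
          calc ε * B.mulVec g i ≤ ((d i - B.mulVec x₀ i) / B.mulVec g i) * B.mulVec g i :=
            mul_le_mul_of_nonneg_right this (le_of_lt hgi)
          _ = d i - B.mulVec x₀ i := by field_simp
        linarith
      · push_neg at hi
        have : ε * B.mulVec g i ≤ 0 := mul_nonpos_of_nonneg_of_nonpos (le_of_lt hε) hi
        have := hx2 i
        linarith
  by_cases hFe : F.Nonempty
  · set ε := F.inf' hFe (fun m => (d m - B.mulVec x₀ m) / B.mulVec g m) with hεdef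
    have hεpos : 0 < ε := by
      rw [hεdef, Finset.lt_inf'_iff]
      intro m hm
      simp only [hF, Finset.mem_filter] at hm
      exact div_pos (by linarith [hslack m hm.2]) hm.2
    exact ⟨ε, hεpos, key ε hεpos (fun m hm => Finset.inf'_le _ hm)⟩
  · refine ⟨1, one_pos, key 1 one_pos ?_⟩
    intro m hm
    exact absurd ⟨m, hm⟩ hFe

lemma dot_sum' {n : ℕ} (c : Fin n → ℝ) (s : Finset ℕ) (w : ℕ → ℝ) (yv : ℕ → Fin n → ℝ) :
    c ⬝ᵥ (∑ p ∈ s, w p • yv p) = ∑ p ∈ s, w p * (c ⬝ᵥ yv p) := by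
  simp only [dotProduct, Finset.sum_apply, Pi.smul_apply, smul_eq_mul, Finset.mul_sum]
  rw [Finset.sum_comm]
  refine Finset.sum_congr rfl (fun p _ => ?_)
  refine Finset.sum_congr rfl (fun m _ => ?_)
  ring

lemma mulVec_sum' {n mB : ℕ} (B : Matrix (Fin mB) (Fin n) ℝ) (s : Finset ℕ) (w : ℕ → ℝ)
    (yv : ℕ → Fin n → ℝ) :
    B.mulVec (∑ p ∈ s, w p • yv p) = ∑ p ∈ s, w p • B.mulVec (yv p) := by
  have := map_sum B.mulVecLin (fun p => w p • yv p) s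
  simp only [_root_.map_smul, Matrix.mulVecLin_apply, Matrix.mulVec_smul] at this
  simpa [Matrix.mulVec_smul] using this

lemma telescope' {n : ℕ} {k : ℕ} {x y : ℕ → Fin n → ℝ} {α : ℕ → ℝ}
    (hstep : ∀ i < k, x (i + 1) = x i + α i • y i) :
    ∀ i j, i ≤ j → j ≤ k → x j = x i + ∑ p ∈ Finset.Ico i j, α p • y p := by
  intro i j hij
  induction j, hij using Nat.le_induction with
  | base => intro _; simp
  | succ j hij ih =>
    intro hjk
    have h1 := ih (by omega)
    rw [hstep j (by omega), h1, Finset.sum_Ico_succ_top hij]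
    abel


lemma window_core {n mA mB : ℕ} {A : Matrix (Fin mA) (Fin n) ℝ} {B : Matrix (Fin mB) (Fin n) ℝ}
    {b : Fin mA → ℝ} {d : Fin mB → ℝ} {c : Fin n → ℝ} {P : Set (Fin n → ℝ)}
    {k : ℕ} {x y : ℕ → Fin n → ℝ} {α : ℕ → ℝ}
    (hP : P = {x | A.mulVec x = b ∧ ∀ i, B.mulVec x i ≤ d i})
    (hxP : ∀ i ≤ k, x i ∈ P)
    (hsd : ∀ i < k, IsSteepestDescentDirection P B c (x i) (y i))
    (hcy : ∀ i < k, c ⬝ᵥ y i < 0) (hα : ∀ i < k, 0 < α i)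
    (hstep : ∀ i < k, x (i + 1) = x i + α i • y i)
    {i j : ℕ} (hij : i ≤ j) (hjk : j < k) :
    ∃ β : ℝ, 0 < β ∧
      (∀ p ∈ Finset.Icc i j, 0 < (if p = j then β else α p)) ∧
      (c ⬝ᵥ y i / ∑ m, |B.mulVec (y i) m|) *
          (∑ p ∈ Finset.Icc i j, (if p = j then β else α p) * ∑ m, |B.mulVec (y p) m|)
        ≤ (∑ p ∈ Finset.Icc i j, (if p = j then β else α p) * (c ⬝ᵥ y p)) ∧
      ((∑ p ∈ Finset.Icc i j, (if p = j then β else α p) * (c ⬝ᵥ y p)) ≤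
          (c ⬝ᵥ y i / ∑ m, |B.mulVec (y i) m|) *
          (∑ p ∈ Finset.Icc i j, (if p = j then β else α p) * ∑ m, |B.mulVec (y p) m|) →
        ∀ m : Fin mB, ∀ p ∈ Finset.Icc i j, ∀ q ∈ Finset.Icc i j,
          0 < B.mulVec (y p) m → 0 ≤ B.mulVec (y q) m) := by
  classical
  have hik : i < k := lt_of_le_of_lt hij hjk
  have hNi : (0:ℝ) < ∑ m, |B.mulVec (y i) m| := sum_abs_pos' (hsd i hik).2.1
  have hst_neg : c ⬝ᵥ y i / ∑ m, |B.mulVec (y i) m| < 0 :=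
    div_neg_of_neg_of_pos (hcy i hik) hNi
  set st := c ⬝ᵥ y i / ∑ m, |B.mulVec (y i) m| with hstdef
  obtain ⟨β0, hβ0, hβ0P⟩ := (hsd j hjk).1
  have hxjP : x j ∈ P := hxP j (le_of_lt hjk)
  -- segment feasibility
  have hseg : ∀ β : ℝ, 0 < β → β ≤ β0 → x j + β • y j ∈ P := by
    intro β hβ hββ0
    rw [hP]
    have hconv := @convex_poly n mA mB A B b d
    have h1 : x j ∈ {x : Fin n → ℝ | A.mulVec x = b ∧ ∀ i, B.mulVec x i ≤ d i} := by
      rw [hP] at hxjP; exact hxjP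
    have h2 : x j + β0 • y j ∈ {x : Fin n → ℝ | A.mulVec x = b ∧ ∀ i, B.mulVec x i ≤ d i} := by
      rw [hP] at hβ0P; exact hβ0P
    have hcomb := hconv h1 h2 (a := 1 - β/β0) (b := β/β0)
      (by have : β/β0 ≤ 1 := (div_le_one hβ0).mpr hββ0; linarith)
      (le_of_lt (div_pos hβ hβ0)) (by ring)
    have : (1 - β/β0) • x j + (β/β0) • (x j + β0 • y j) = x j + β • y j := by
      rw [smul_add, smul_smul]
      have : β / β0 * β0 = β := by field_simp
      rw [this]
      funext m
      simp only [Pi.add_apply, Pi.smul_apply, smul_eq_mul]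
      ring
    rwa [this] at hcomb
  -- the two candidate βs; pick one making B v ≠ 0
  have key : ∀ β : ℝ, 0 < β → β ≤ β0 →
      B.mulVec (∑ p ∈ Finset.Icc i j, (if p = j then β else α p) • y p) ≠ 0 →
      (0 < β ∧
      (∀ p ∈ Finset.Icc i j, 0 < (if p = j then β else α p)) ∧
      st * (∑ p ∈ Finset.Icc i j, (if p = j then β else α p) * ∑ m, |B.mulVec (y p) m|)
        ≤ (∑ p ∈ Finset.Icc i j, (if p = j then β else α p) * (c ⬝ᵥ y p)) ∧
      ((∑ p ∈ Finset.Icc i j, (if p = j then β else α p) * (c ⬝ᵥ y p)) ≤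
          st * (∑ p ∈ Finset.Icc i j, (if p = j then β else α p) * ∑ m, |B.mulVec (y p) m|) →
        ∀ m : Fin mB, ∀ p ∈ Finset.Icc i j, ∀ q ∈ Finset.Icc i j,
          0 < B.mulVec (y p) m → 0 ≤ B.mulVec (y q) m)) := by
    intro β hβ hββ0 hBv
    set w : ℕ → ℝ := fun p => if p = j then β else α p with hwdef
    have hwpos : ∀ p ∈ Finset.Icc i j, 0 < w p := by
      intro p hp
      rw [hwdef]
      by_cases hpj : p = j
      · simp [hpj, hβ]
      · simp only [if_neg hpj]
        exact hα p (lt_of_le_of_lt (Finset.mem_Icc.mp hp).2 hjk)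
    set v := ∑ p ∈ Finset.Icc i j, w p • y p with hvdef
    -- v = (x j - x i) + β • y j
    have hv_split : x i + v = x j + β • y j := by
      have htel := telescope' hstep i j hij (le_of_lt hjk)
      have hIcc : Finset.Icc i j = Finset.Ico i (j+1) := by rw [Finset.Ico_add_one_right_eq_Icc]
      have : v = (∑ p ∈ Finset.Ico i j, α p • y p) + β • y j := by
        rw [hvdef, hIcc, Finset.sum_Ico_succ_top hij]
        congr 1
        · refine Finset.sum_congr rfl (fun p hp => ?_)
          have : p ≠ j := by have := (Finset.mem_Ico.mp hp).2; omega
          rw [hwdef]; simp [this]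
        · rw [hwdef]; simp
      rw [this, htel]
      abel
    have hfeas : StrictlyFeasible P (x i) v := by
      refine ⟨1, one_pos, ?_⟩
      rw [one_smul, hv_split]
      exact hseg β hβ hββ0
    -- linear algebra
    have hBv_eq : B.mulVec v = ∑ p ∈ Finset.Icc i j, w p • B.mulVec (y p) := by
      rw [hvdef]; exact mulVec_sum' B _ _ _
    have hcv_eq : c ⬝ᵥ v = ∑ p ∈ Finset.Icc i j, w p * (c ⬝ᵥ y p) := by
      rw [hvdef]; exact dot_sum' c _ _ _
    set W := ∑ p ∈ Finset.Icc i j, w p * ∑ m, |B.mulVec (y p) m| with hWdef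
    set Nv := ∑ m, |B.mulVec v m| with hNvdef
    have hNv_pos : 0 < Nv := sum_abs_pos' hBv
    -- per-coordinate triangle inequality
    have htri : ∀ m, |B.mulVec v m| ≤ ∑ p ∈ Finset.Icc i j, w p * |B.mulVec (y p) m| := by
      intro m
      have : B.mulVec v m = ∑ p ∈ Finset.Icc i j, w p * B.mulVec (y p) m := by
        rw [hBv_eq, Finset.sum_apply]
        refine Finset.sum_congr rfl (fun p _ => ?_)
        simp
      rw [this]
      refine le_trans (Finset.abs_sum_le_sum_abs _ _) ?_
      refine Finset.sum_le_sum (fun p hp => ?_)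
      rw [abs_mul, abs_of_pos (hwpos p hp)]
    have hNvW : Nv ≤ W := by
      rw [hNvdef, hWdef]
      calc ∑ m, |B.mulVec v m| ≤ ∑ m, ∑ p ∈ Finset.Icc i j, w p * |B.mulVec (y p) m| :=
        Finset.sum_le_sum (fun m _ => htri m)
      _ = ∑ p ∈ Finset.Icc i j, w p * ∑ m, |B.mulVec (y p) m| := by
        rw [Finset.sum_comm]
        exact Finset.sum_congr rfl (fun p _ => by rw [Finset.mul_sum])
    -- minimality of steepness
    have hmin := (hsd i hik).2.2 v hfeas hBv
    rw [← hstdef, ← hNvdef, hcv_eq] at hmin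
    have hstNv : st * Nv ≤ ∑ p ∈ Finset.Icc i j, w p * (c ⬝ᵥ y p) :=
      (le_div_iff₀ hNv_pos).mp hmin
    have hI : st * W ≤ ∑ p ∈ Finset.Icc i j, w p * (c ⬝ᵥ y p) := by
      have : st * W ≤ st * Nv := by
        apply mul_le_mul_of_nonpos_left hNvW (le_of_lt hst_neg)
      linarith
    refine ⟨hβ, hwpos, hI, ?_⟩
    -- equality case
    intro hII m0 p hp q hq hyp
    have hWNv : W = Nv := by
      have h1 : st * W = st * Nv := by
        have h2 : st * Nv ≤ st * W := by linarith
        have h3 : st * W ≤ st * Nv := mul_le_mul_of_nonpos_left hNvW (le_of_lt hst_neg)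
        linarith
      exact (mul_left_cancel₀ (ne_of_lt hst_neg) h1)
    -- per-coordinate equality of triangle inequality
    have hcoord : ∀ m, ∑ p ∈ Finset.Icc i j, w p * |B.mulVec (y p) m| ≤ |B.mulVec v m| := by
      have hsum0 : ∑ m, (∑ p ∈ Finset.Icc i j, w p * |B.mulVec (y p) m| - |B.mulVec v m|) = 0 := by
        rw [Finset.sum_sub_distrib]
        have : ∑ m, ∑ p ∈ Finset.Icc i j, w p * |B.mulVec (y p) m| = W := by
          rw [hWdef, Finset.sum_comm]
          exact Finset.sum_congr rfl (fun p _ => by rw [Finset.mul_sum])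
        rw [this, ← hNvdef, hWNv]
        ring
      intro m
      have hnn : ∀ m' ∈ Finset.univ,
          (0:ℝ) ≤ ∑ p ∈ Finset.Icc i j, w p * |B.mulVec (y p) m'| - |B.mulVec v m'| :=
        fun m' _ => by linarith [htri m']
      have := (Finset.sum_eq_zero_iff_of_nonneg hnn).mp hsum0 m (Finset.mem_univ m)
      linarith
    -- apply noCancel at coordinate m0
    have hveq : B.mulVec v m0 = ∑ p ∈ Finset.Icc i j, w p * B.mulVec (y p) m0 := by
      rw [hBv_eq, Finset.sum_apply]
      exact Finset.sum_congr rfl (fun p _ => by simp)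
    have habs : ∑ p ∈ Finset.Icc i j, |w p * B.mulVec (y p) m0| ≤
        |∑ p ∈ Finset.Icc i j, w p * B.mulVec (y p) m0| := by
      rw [← hveq]
      refine le_trans (le_of_eq ?_) (hcoord m0)
      exact Finset.sum_congr rfl (fun p hp => by rw [abs_mul, abs_of_pos (hwpos p hp)])
    have := noCancel (Finset.Icc i j) (fun p => w p * B.mulVec (y p) m0) habs hp hq
      (mul_pos (hwpos p hp) hyp)
    exact nonneg_of_mul_nonneg_right this (hwpos q hq)
  -- choose β
  set v0 := ∑ p ∈ Finset.Icc i j, (if p = j then β0 else α p) • y p with hv0def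
  by_cases hB0 : B.mulVec v0 ≠ 0
  · obtain ⟨h1, h2, h3, h4⟩ := key β0 hβ0 (le_refl β0) hB0
    exact ⟨β0, h1, h2, h3, h4⟩
  · push_neg at hB0
    have hB1 : B.mulVec (∑ p ∈ Finset.Icc i j, (if p = j then β0/2 else α p) • y p) ≠ 0 := by
      intro hB1
      apply (hsd j hjk).2.1
      have hsplit : ∀ β : ℝ, ∑ p ∈ Finset.Icc i j, (if p = j then β else α p) • y p =
          (∑ p ∈ Finset.Ico i j, α p • y p) + β • y j := by
        intro β
        rw [← Finset.Ico_add_one_right_eq_Icc, Finset.sum_Ico_succ_top hij]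
        congr 1
        · refine Finset.sum_congr rfl (fun p hp => ?_)
          have : p ≠ j := by have := (Finset.mem_Ico.mp hp).2; omega
          simp [this]
        · simp
      have e0 : B.mulVec ((∑ p ∈ Finset.Ico i j, α p • y p) + β0 • y j) = 0 := by
        rw [← hsplit β0, ← hv0def]; exact hB0
      have e1 : B.mulVec ((∑ p ∈ Finset.Ico i j, α p • y p) + (β0/2) • y j) = 0 := by
        rw [← hsplit (β0/2)]; exact hB1
      have : (β0/2) • B.mulVec (y j) = 0 := by
        have := sub_eq_zero.mpr (e0.trans e1.symm)
        rw [Matrix.mulVec_add, Matrix.mulVec_add, Matrix.mulVec_smul, Matrix.mulVec_smul] at this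
        have h2 : β0 • B.mulVec (y j) - (β0/2) • B.mulVec (y j) = (β0/2) • B.mulVec (y j) := by
          rw [← sub_smul]; congr 1; ring
        rw [← h2]
        abel_nf
        abel_nf at this
        exact this
      have hhalf : β0/2 ≠ 0 := by positivity
      exact (smul_eq_zero.mp this).resolve_left hhalf
    obtain ⟨h1, h2, h3, h4⟩ := key (β0/2) (by positivity) (by linarith) hB1
    exact ⟨β0/2, h1, h2, h3, h4⟩

lemma dot_list {n : ℕ} (c : Fin n → ℝ) (l : List (ℝ × (Fin n → ℝ))) (f : (Fin n → ℝ) → Fin n → ℝ) :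
    c ⬝ᵥ (l.map (fun p => p.1 • f p.2)).sum = (l.map (fun p => p.1 * (c ⬝ᵥ f p.2))).sum := by
  induction l with
  | nil => simp
  | cons h t ih => simp [List.map_cons, List.sum_cons, dotProduct_add, dotProduct_smul, ih,
      smul_eq_mul]

lemma mulVec_list {n m' m : ℕ} (M : Matrix (Fin m') (Fin n) ℝ) (l : List (ℝ × (Fin m → ℝ)))
    (f : (Fin m → ℝ) → Fin n → ℝ) :
    M.mulVec (l.map (fun p => p.1 • f p.2)).sum = (l.map (fun p => p.1 • M.mulVec (f p.2))).sum := by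
  induction l with
  | nil => simp
  | cons h t ih => simp [List.map_cons, List.sum_cons, Matrix.mulVec_add, Matrix.mulVec_smul, ih]

lemma list_sum_apply' {m : ℕ} {γ : Type*} (l : List γ) (f : γ → Fin m → ℝ) (i : Fin m) :
    (l.map f).sum i = (l.map (fun p => f p i)).sum := by
  induction l with
  | nil => simp
  | cons h t ih => simp [List.map_cons, List.sum_cons, ih]

lemma sum_list_swap {m : ℕ} {γ : Type*} (l : List γ) (f : γ → Fin m → ℝ) :
    ∑ i, (l.map (fun p => f p i)).sum = (l.map (fun p => ∑ i, f p i)).sum := by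
  induction l with
  | nil => simp
  | cons h t ih => simp [List.map_cons, List.sum_cons, Finset.sum_add_distrib, ih]

lemma list_all_zero {l : List ℝ} (hnn : ∀ a ∈ l, 0 ≤ a) (hsum : l.sum = 0) : ∀ a ∈ l, a = 0 := by
  induction l with
  | nil => simp
  | cons h t ih =>
    simp only [List.sum_cons] at hsum
    have ht : 0 ≤ t.sum := List.sum_nonneg (fun a ha => hnn a (List.mem_cons_of_mem h ha))
    have hh : 0 ≤ h := hnn h (List.mem_cons_self)
    have hh0 : h = 0 := by linarith
    have ht0 : t.sum = 0 := by linarith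
    intro a ha
    rcases List.mem_cons.mp ha with h1 | h1
    · rw [h1]; exact hh0
    · exact ih (fun a ha => hnn a (List.mem_cons_of_mem h ha)) ht0 a h1

/-- If S is finite and a circuit exists, then c is orthogonal to ker A ∩ ker B. -/
lemma cr_zero {n mA mB : ℕ} {A : Matrix (Fin mA) (Fin n) ℝ} {B : Matrix (Fin mB) (Fin n) ℝ}
    {c : Fin n → ℝ} {S : Set ℝ}
    (hS : S = {s : ℝ | ∃ g : Fin n → ℝ, IsCircuit A B g ∧
      s = c ⬝ᵥ g / (∑ i, |B.mulVec g i|)})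
    (hSfin : S.Finite)
    {g0 : Fin n → ℝ} (hg0 : IsCircuit A B g0)
    {r : Fin n → ℝ} (hAr : A.mulVec r = 0) (hBr : B.mulVec r = 0) : c ⬝ᵥ r = 0 := by
  by_contra hcr
  have hN : (0:ℝ) < ∑ i, |B.mulVec g0 i| := sum_abs_pos' hg0.2.1
  have hmem : ∀ t : ℝ, (c ⬝ᵥ g0 + t * (c ⬝ᵥ r)) / (∑ i, |B.mulVec g0 i|) ∈ S := by
    intro t
    rw [hS]
    refine ⟨g0 + t • r, ?_, ?_⟩
    · have hBeq : B.mulVec (g0 + t • r) = B.mulVec g0 := by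
        rw [Matrix.mulVec_add, Matrix.mulVec_smul, hBr]; simp
      refine ⟨?_, ?_, ?_⟩
      · rw [Matrix.mulVec_add, Matrix.mulVec_smul, hg0.1, hAr]; simp
      · rw [hBeq]; exact hg0.2.1
      · intro x hx1 hx2 hx3
        rw [hBeq] at hx3 ⊢
        exact hg0.2.2 x hx1 hx2 hx3
    · have hBeq : B.mulVec (g0 + t • r) = B.mulVec g0 := by
        rw [Matrix.mulVec_add, Matrix.mulVec_smul, hBr]; simp
      rw [hBeq, dotProduct_add, dotProduct_smul]
      simp [smul_eq_mul]
  have hinj : Function.Injective (fun t : ℝ => (c ⬝ᵥ g0 + t * (c ⬝ᵥ r)) / (∑ i, |B.mulVec g0 i|)) := by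
    intro t1 t2 h
    simp only at h
    have h2' := (div_eq_div_iff (ne_of_gt hN) (ne_of_gt hN)).mp h
    have h2 : c ⬝ᵥ g0 + t1 * (c ⬝ᵥ r) = c ⬝ᵥ g0 + t2 * (c ⬝ᵥ r) :=
      mul_right_cancel₀ (ne_of_gt hN) h2'
    have h3 : t1 * (c ⬝ᵥ r) = t2 * (c ⬝ᵥ r) := by linarith
    exact mul_right_cancel₀ hcr h3
  have : S.Infinite := Set.infinite_of_injective_forall_mem hinj hmem
  exact this hSfin

lemma list_sum_neg {γ : Type*} (l : List γ) (f : γ → ℝ) :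
    (l.map (fun p => -(f p))).sum = -(l.map f).sum := by
  induction l with
  | nil => simp
  | cons h t ih => simp [List.map_cons, List.sum_cons, ih]; ring

lemma list_sum_sub {γ : Type*} (l : List γ) (f g : γ → ℝ) :
    (l.map (fun p => f p - g p)).sum = (l.map f).sum - (l.map g).sum := by
  induction l with
  | nil => simp
  | cons h t ih => simp [List.map_cons, List.sum_cons, ih]; ring

lemma list_sum_mul_left {γ : Type*} (l : List γ) (r : ℝ) (f : γ → ℝ) :
    (l.map (fun p => r * f p)).sum = r * (l.map f).sum := by
  induction l with
  | nil => simp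
  | cons h t ih => simp [List.map_cons, List.sum_cons, ih]; ring

/-- Each steepest-descent steepness value is the steepness of some circuit. -/
lemma st_mem_S {n mA mB : ℕ} {A : Matrix (Fin mA) (Fin n) ℝ} {B : Matrix (Fin mB) (Fin n) ℝ}
    {b : Fin mA → ℝ} {d : Fin mB → ℝ} {c : Fin n → ℝ} {P : Set (Fin n → ℝ)}
    {k : ℕ} {x y : ℕ → Fin n → ℝ} {S : Set ℝ}
    (hP : P = {x | A.mulVec x = b ∧ ∀ i, B.mulVec x i ≤ d i})
    (hS : S = {s : ℝ | ∃ g : Fin n → ℝ, IsCircuit A B g ∧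
      s = c ⬝ᵥ g / (∑ i, |B.mulVec g i|)})
    (hSfin : S.Finite)
    (hxP : ∀ i ≤ k, x i ∈ P)
    (hsd : ∀ i < k, IsSteepestDescentDirection P B c (x i) (y i))
    {i : ℕ} (hik : i < k) :
    (c ⬝ᵥ y i / ∑ m, |B.mulVec (y i) m|) ∈ S := by
  classical
  obtain ⟨a, ha, haP⟩ := (hsd i hik).1
  have hxiP := hxP i (le_of_lt hik)
  rw [hP] at haP hxiP
  have hAyi : A.mulVec (y i) = 0 := by
    have h2 : A.mulVec (x i) + a • A.mulVec (y i) = b := by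
      rw [← Matrix.mulVec_smul, ← Matrix.mulVec_add]; exact haP.1
    have h3 : a • A.mulVec (y i) = 0 := by
      rw [hxiP.1] at h2
      have := add_left_cancel (a := b) (by rw [h2, add_zero] : b + a • A.mulVec (y i) = b + 0)
      exact this
    exact (smul_eq_zero.mp h3).resolve_left (ne_of_gt ha)
  set u := B.mulVec (y i) with hudef
  have hu : u ≠ 0 := (hsd i hik).2.1
  have hNu : 0 < ∑ m, |u m| := sum_abs_pos' hu
  obtain ⟨l, hl, hlsum⟩ := exists_decomposition A B
    ((Finset.univ.filter (fun m => u m ≠ 0)).card) u le_rfl ⟨y i, hAyi, rfl⟩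
  obtain ⟨g0, hg0, _⟩ := exists_conformal_circuit A B
    ((Finset.univ.filter (fun m => u m ≠ 0)).card) u le_rfl ⟨y i, hAyi, rfl⟩ hu
  -- remainder is in both kernels
  set rr := y i - (l.map (fun p => p.1 • p.2)).sum with hrrdef
  have hBlist : B.mulVec (l.map (fun p => p.1 • p.2)).sum =
      (l.map (fun p => p.1 • B.mulVec p.2)).sum := by
    have := mulVec_list B l id
    simpa using this
  have hBr : B.mulVec rr = 0 := by
    rw [hrrdef, Matrix.mulVec_sub, hBlist, ← hlsum, ← hudef]; simp
  have hAr : A.mulVec rr = 0 := by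
    rw [hrrdef, Matrix.mulVec_sub, hAyi]
    have : A.mulVec (l.map (fun p => p.1 • p.2)).sum =
        (l.map (fun p => p.1 • A.mulVec p.2)).sum := by
      have := mulVec_list A l id; simpa using this
    rw [this]
    have hz : ∀ z ∈ l.map (fun p => p.1 • A.mulVec p.2), z = 0 := by
      intro z hz
      obtain ⟨p, hp, hpz⟩ := List.mem_map.mp hz
      rw [← hpz, (hl p hp).2.1.1]; simp
    rw [List.sum_eq_zero hz]; simp
  have hcr : c ⬝ᵥ rr = 0 := cr_zero hS hSfin hg0 hAr hBr
  -- c y i is the weighted sum of circuit objective values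
  have hcy_eq : c ⬝ᵥ y i = (l.map (fun p => p.1 * (c ⬝ᵥ p.2))).sum := by
    have h1 : c ⬝ᵥ y i = c ⬝ᵥ rr + c ⬝ᵥ (l.map (fun p => p.1 • p.2)).sum := by
      rw [← dotProduct_add, hrrdef]; congr 1; abel
    have h2 : c ⬝ᵥ (l.map (fun p => p.1 • p.2)).sum = (l.map (fun p => p.1 * (c ⬝ᵥ p.2))).sum := by
      have := dot_list c l id
      simpa using this
    rw [h1, h2, hcr, zero_add]
  -- norm additivity
  have hnorm_eq : ∑ m, |u m| = (l.map (fun p => p.1 * ∑ m, |B.mulVec p.2 m|)).sum := by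
    have hcoord : ∀ m, |u m| = (l.map (fun p => p.1 * |B.mulVec p.2 m|)).sum := by
      intro m
      have hum : u m = (l.map (fun p => p.1 * B.mulVec p.2 m)).sum := by
        have := congrFun hlsum m
        rw [list_sum_apply' l (fun p => p.1 • B.mulVec p.2) m] at this
        simpa using this
      rcases lt_trichotomy (u m) 0 with hneg | hzero | hpos
      · have hent : ∀ p ∈ l, B.mulVec p.2 m ≤ 0 := by
          intro p hp
          by_contra hc
          push_neg at hc
          have hconf := (hl p hp).2.2 m (ne_of_gt hc)
          nlinarith
        have : (l.map (fun p => p.1 * |B.mulVec p.2 m|)).sum =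
            (l.map (fun p => -(p.1 * B.mulVec p.2 m))).sum := by
          refine congrArg List.sum (List.map_congr_left ?_)
          intro p hp
          rw [abs_of_nonpos (hent p hp)]
          ring
        rw [this, list_sum_neg, ← hum, abs_of_neg hneg]
      · have hent : ∀ p ∈ l, B.mulVec p.2 m = 0 := by
          intro p hp
          by_contra hc
          have hconf := (hl p hp).2.2 m hc
          rw [hzero, mul_zero] at hconf
          exact lt_irrefl _ hconf
        have h0 : (l.map (fun p => p.1 * |B.mulVec p.2 m|)).sum = 0 := by
          refine List.sum_eq_zero ?_
          intro z hz
          obtain ⟨p, hp, hpz⟩ := List.mem_map.mp hz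
          rw [← hpz, hent p hp]; simp
        rw [h0, hzero]; simp
      · have hent : ∀ p ∈ l, 0 ≤ B.mulVec p.2 m := by
          intro p hp
          by_contra hc
          push_neg at hc
          have hconf := (hl p hp).2.2 m (ne_of_lt hc)
          nlinarith
        have : (l.map (fun p => p.1 * |B.mulVec p.2 m|)).sum =
            (l.map (fun p => p.1 * B.mulVec p.2 m)).sum := by
          refine congrArg List.sum (List.map_congr_left ?_)
          intro p hp
          rw [abs_of_nonneg (hent p hp)]
        rw [this, ← hum, abs_of_pos hpos]
    calc ∑ m, |u m| = ∑ m, (l.map (fun p => p.1 * |B.mulVec p.2 m|)).sum :=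
      Finset.sum_congr rfl (fun m _ => hcoord m)
    _ = (l.map (fun p => ∑ m, p.1 * |B.mulVec p.2 m|)).sum :=
      sum_list_swap l (fun p m => p.1 * |B.mulVec p.2 m|)
    _ = (l.map (fun p => p.1 * ∑ m, |B.mulVec p.2 m|)).sum := by
      refine congrArg List.sum (List.map_congr_left ?_)
      intro p hp
      rw [Finset.mul_sum]
  set st := c ⬝ᵥ y i / ∑ m, |u m| with hstdef
  -- each circuit in the decomposition is strictly feasible, so has steepness ≥ st
  have hsteep : ∀ p ∈ l, st * (∑ m, |B.mulVec p.2 m|) ≤ c ⬝ᵥ p.2 := by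
    intro p hp
    obtain ⟨hp1, hp2, hp3⟩ := hl p hp
    have hNp : 0 < ∑ m, |B.mulVec p.2 m| := sum_abs_pos' hp2.2.1
    have hslack : ∀ m, 0 < B.mulVec p.2 m → B.mulVec (x i) m < d m := by
      intro m hm
      have hum : 0 < u m := by
        have := hp3 m (ne_of_gt hm)
        nlinarith
      have hfeas := haP.2 m
      rw [Matrix.mulVec_add, Matrix.mulVec_smul] at hfeas
      simp only [Pi.add_apply, Pi.smul_apply, smul_eq_mul] at hfeas
      nlinarith [mul_pos ha hum, hfeas]
    obtain ⟨ε, hε, hfeasA, hfeasB⟩ := feas_helper hxiP.1 hxiP.2 hp2.1 hslack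
    have hsf : StrictlyFeasible P (x i) p.2 := ⟨ε, hε, by rw [hP]; exact ⟨hfeasA, hfeasB⟩⟩
    have := (hsd i hik).2.2 p.2 hsf hp2.2.1
    rw [← hudef, ← hstdef] at this
    exact (le_div_iff₀ hNp).mp this
  -- the balancing list
  have hbal : ∀ p ∈ l, p.1 * (c ⬝ᵥ p.2) - st * (p.1 * ∑ m, |B.mulVec p.2 m|) = 0 := by
    have hsum0 : (l.map (fun p => p.1 * (c ⬝ᵥ p.2) - st * (p.1 * ∑ m, |B.mulVec p.2 m|))).sum
        = 0 := by
      rw [list_sum_sub l (fun p => p.1 * (c ⬝ᵥ p.2)) (fun p => st * (p.1 * ∑ m, |B.mulVec p.2 m|)),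
        list_sum_mul_left l st (fun p => p.1 * ∑ m, |B.mulVec p.2 m|), ← hcy_eq, ← hnorm_eq]
      rw [hstdef]
      field_simp
      ring
    have hnn : ∀ z ∈ l.map (fun p => p.1 * (c ⬝ᵥ p.2) - st * (p.1 * ∑ m, |B.mulVec p.2 m|)),
        0 ≤ z := by
      intro z hz
      obtain ⟨p, hp, hpz⟩ := List.mem_map.mp hz
      have h1 := hsteep p hp
      have h2 := (hl p hp).1
      rw [← hpz]
      nlinarith
    intro p hp
    have := list_all_zero hnn hsum0 _ (List.mem_map.mpr ⟨p, hp, rfl⟩)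
    exact this
  -- l is nonempty
  have hlne : l ≠ [] := by
    intro h0
    rw [h0] at hlsum
    simp at hlsum
    exact hu hlsum
  obtain ⟨p0, hp0⟩ := List.exists_mem_of_ne_nil l hlne
  have hNp0 : 0 < ∑ m, |B.mulVec p0.2 m| := sum_abs_pos' (hl p0 hp0).2.1.2.1
  have hp0w := (hl p0 hp0).1
  have hfin : st = c ⬝ᵥ p0.2 / ∑ m, |B.mulVec p0.2 m| := by
    have := hbal p0 hp0
    have h1 : p0.1 * (c ⬝ᵥ p0.2 - st * ∑ m, |B.mulVec p0.2 m|) = 0 := by linarith [this]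
    have h2 : c ⬝ᵥ p0.2 - st * ∑ m, |B.mulVec p0.2 m| = 0 :=
      (mul_eq_zero.mp h1).resolve_left (ne_of_gt hp0w)
    field_simp
    linarith
  rw [hS]
  exact ⟨p0.2, (hl p0 hp0).2.1, hfin⟩

lemma Ay_zero {n mA mB : ℕ} {A : Matrix (Fin mA) (Fin n) ℝ} {B : Matrix (Fin mB) (Fin n) ℝ}
    {b : Fin mA → ℝ} {d : Fin mB → ℝ} {P : Set (Fin n → ℝ)}
    (hP : P = {x | A.mulVec x = b ∧ ∀ i, B.mulVec x i ≤ d i})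
    {x₀ yv : Fin n → ℝ} (hx : x₀ ∈ P) (hsf : StrictlyFeasible P x₀ yv) :
    A.mulVec yv = 0 := by
  obtain ⟨a, ha, haP⟩ := hsf
  rw [hP] at hx haP
  have h2 : A.mulVec x₀ + a • A.mulVec yv = b := by
    rw [← Matrix.mulVec_smul, ← Matrix.mulVec_add]; exact haP.1
  rw [hx.1] at h2
  have h3 : a • A.mulVec yv = 0 := by
    have := add_left_cancel (a := b) (by rw [h2, add_zero] : b + a • A.mulVec yv = b + 0)
    exact this
  exact (smul_eq_zero.mp h3).resolve_left (ne_of_gt ha)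

lemma st_mono {n mA mB : ℕ} {A : Matrix (Fin mA) (Fin n) ℝ} {B : Matrix (Fin mB) (Fin n) ℝ}
    {b : Fin mA → ℝ} {d : Fin mB → ℝ} {c : Fin n → ℝ} {P : Set (Fin n → ℝ)}
    {k : ℕ} {x y : ℕ → Fin n → ℝ} {α : ℕ → ℝ}
    (hP : P = {x | A.mulVec x = b ∧ ∀ i, B.mulVec x i ≤ d i})
    (hxP : ∀ i ≤ k, x i ∈ P)
    (hsd : ∀ i < k, IsSteepestDescentDirection P B c (x i) (y i))
    (hcy : ∀ i < k, c ⬝ᵥ y i < 0) (hα : ∀ i < k, 0 < α i)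
    (hstep : ∀ i < k, x (i + 1) = x i + α i • y i) :
    ∀ i j, i ≤ j → j < k →
      c ⬝ᵥ y i / ∑ m, |B.mulVec (y i) m| ≤ c ⬝ᵥ y j / ∑ m, |B.mulVec (y j) m| := by
  have hcons : ∀ i, i + 1 < k →
      c ⬝ᵥ y i / ∑ m, |B.mulVec (y i) m| ≤ c ⬝ᵥ y (i+1) / ∑ m, |B.mulVec (y (i+1)) m| := by
    intro i hik1
    have hik : i < k := by omega
    obtain ⟨β, hβ, hw, hI, _⟩ := window_core hP hxP hsd hcy hα hstep (by omega : i ≤ i + 1) hik1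
    have hii : i ≠ i + 1 := by omega
    have hsum : ∀ f : ℕ → ℝ,
        ∑ p ∈ Finset.Icc i (i+1), (if p = i+1 then β else α p) * f p
          = α i * f i + β * f (i+1) := by
      intro f
      rw [← Finset.Ico_add_one_right_eq_Icc, Finset.sum_Ico_succ_top (by omega : i ≤ i+1),
        Nat.Ico_succ_singleton, Finset.sum_singleton, if_neg hii, if_pos rfl]
    rw [hsum, hsum] at hI
    set st := c ⬝ᵥ y i / ∑ m, |B.mulVec (y i) m| with hstdef
    set Ni := ∑ m, |B.mulVec (y i) m| with hNidef
    set Nj := ∑ m, |B.mulVec (y (i+1)) m| with hNjdef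
    have hNi : 0 < Ni := sum_abs_pos' (hsd i hik).2.1
    have hNj : 0 < Nj := sum_abs_pos' (hsd (i+1) hik1).2.1
    have hexp : st * (α i * Ni + β * Nj) = α i * (st * Ni) + β * (st * Nj) := by ring
    rw [hexp] at hI
    have hstNi : st * Ni = c ⬝ᵥ y i := by
      rw [hstdef]; field_simp
    rw [hstNi] at hI
    have h5 : β * (st * Nj) ≤ β * (c ⬝ᵥ y (i+1)) := by linarith
    have h6 : st * Nj ≤ c ⬝ᵥ y (i+1) := le_of_mul_le_mul_left h5 hβ
    exact (le_div_iff₀ hNj).mpr h6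
  intro i j hij
  induction j, hij using Nat.le_induction with
  | base => intro _; exact le_refl _
  | succ j hij ih =>
    intro hjk
    exact le_trans (ih (by omega)) (hcons j hjk)

lemma window_conf {n mA mB : ℕ} {A : Matrix (Fin mA) (Fin n) ℝ} {B : Matrix (Fin mB) (Fin n) ℝ}
    {b : Fin mA → ℝ} {d : Fin mB → ℝ} {c : Fin n → ℝ} {P : Set (Fin n → ℝ)}
    {k : ℕ} {x y : ℕ → Fin n → ℝ} {α : ℕ → ℝ}
    (hP : P = {x | A.mulVec x = b ∧ ∀ i, B.mulVec x i ≤ d i})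
    (hxP : ∀ i ≤ k, x i ∈ P)
    (hsd : ∀ i < k, IsSteepestDescentDirection P B c (x i) (y i))
    (hcy : ∀ i < k, c ⬝ᵥ y i < 0) (hα : ∀ i < k, 0 < α i)
    (hstep : ∀ i < k, x (i + 1) = x i + α i • y i)
    {i j : ℕ} (hij : i ≤ j) (hjk : j < k)
    (hconst : ∀ l, i ≤ l → l ≤ j →
      c ⬝ᵥ y l / ∑ m, |B.mulVec (y l) m| = c ⬝ᵥ y i / ∑ m, |B.mulVec (y i) m|) :
    ∀ m : Fin mB, ∀ p, i ≤ p → p ≤ j → ∀ q, i ≤ q → q ≤ j →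
      0 < B.mulVec (y p) m → 0 ≤ B.mulVec (y q) m := by
  obtain ⟨β, hβ, hw, hI, hII⟩ := window_core hP hxP hsd hcy hα hstep hij hjk
  have hpre : (∑ p ∈ Finset.Icc i j, (if p = j then β else α p) * (c ⬝ᵥ y p)) ≤
      (c ⬝ᵥ y i / ∑ m, |B.mulVec (y i) m|) *
      (∑ p ∈ Finset.Icc i j, (if p = j then β else α p) * ∑ m, |B.mulVec (y p) m|) := by
    rw [Finset.mul_sum]
    refine le_of_eq (Finset.sum_congr rfl ?_)
    intro p hp
    obtain ⟨hp1, hp2⟩ := Finset.mem_Icc.mp hp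
    have hpk : p < k := lt_of_le_of_lt hp2 hjk
    have hNp : 0 < ∑ m, |B.mulVec (y p) m| := sum_abs_pos' (hsd p hpk).2.1
    have h1 : c ⬝ᵥ y p = (c ⬝ᵥ y i / ∑ m, |B.mulVec (y i) m|) * ∑ m, |B.mulVec (y p) m| := by
      rw [← hconst p hp1 hp2]
      field_simp
    rw [h1]; ring
  intro m p hp1 hp2 q hq1 hq2 hyp
  exact hII hpre m p (Finset.mem_Icc.mpr ⟨hp1, hp2⟩) q (Finset.mem_Icc.mpr ⟨hq1, hq2⟩) hyp

lemma exists_tight {n mA mB : ℕ} {A : Matrix (Fin mA) (Fin n) ℝ} {B : Matrix (Fin mB) (Fin n) ℝ}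
    {b : Fin mA → ℝ} {d : Fin mB → ℝ} {c : Fin n → ℝ} {P : Set (Fin n → ℝ)}
    {k : ℕ} {x y : ℕ → Fin n → ℝ} {α : ℕ → ℝ}
    (hP : P = {x | A.mulVec x = b ∧ ∀ i, B.mulVec x i ≤ d i})
    (hxP : ∀ i ≤ k, x i ∈ P)
    (hsd : ∀ i < k, IsSteepestDescentDirection P B c (x i) (y i))
    (hα : ∀ i < k, 0 < α i)
    (hstep : ∀ i < k, x (i + 1) = x i + α i • y i)
    (hmax : ∀ i < k, ∀ α' : ℝ, α i < α' → x i + α' • y i ∉ P) :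
    ∀ i < k, ∃ m, 0 < B.mulVec (y i) m ∧ B.mulVec (x (i+1)) m = d m := by
  intro i hik
  by_contra hcon
  push_neg at hcon
  have hx1P := hxP (i+1) (by omega)
  rw [hP] at hx1P
  have hAyi : A.mulVec (y i) = 0 := Ay_zero hP (hxP i (le_of_lt hik)) (hsd i hik).1
  have hslack : ∀ m, 0 < B.mulVec (y i) m → B.mulVec (x (i+1)) m < d m :=
    fun m hm => lt_of_le_of_ne (hx1P.2 m) (hcon m hm)
  obtain ⟨ε, hε, hfA, hfB⟩ := feas_helper hx1P.1 hx1P.2 hAyi hslack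
  have heq : x (i+1) + ε • y i = x i + (α i + ε) • y i := by
    rw [hstep i hik, add_smul]
    abel
  exact hmax i hik (α i + ε) (by linarith) (by
    rw [← heq, hP]
    exact ⟨hfA, hfB⟩)

lemma phase_card_le {n mB : ℕ} {B : Matrix (Fin mB) (Fin n) ℝ} (P : Set (Fin n → ℝ))
    (F : Finset ℕ) (v : ℕ → Fin n → ℝ) (mm : ℕ → Fin mB)
    (hdir : ∀ i ∈ F, v i ∈ (affineSpan ℝ P).direction)
    (hpos : ∀ i ∈ F, 0 < B.mulVec (v i) (mm i))
    (hzero : ∀ i ∈ F, ∀ l ∈ F, i < l → B.mulVec (v l) (mm i) = 0) :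
    F.card ≤ Module.finrank ℝ (affineSpan ℝ P).direction := by
  classical
  set W := (affineSpan ℝ P).direction with hWdef
  set v' : F → W := fun i => ⟨v i, hdir i i.2⟩ with hv'def
  have hli : LinearIndependent ℝ v' := by
    rw [Fintype.linearIndependent_iff]
    intro g hg
    have hgv : ∑ l : F, g l • v (l : ℕ) = 0 := by
      have := congrArg (Subtype.val) hg
      rw [hv'def] at this
      simpa using this
    have key : ∀ N : ℕ, ∀ i : F, (i : ℕ) = N → g i = 0 := by
      intro N
      induction N using Nat.strong_induction_on with
      | _ N ih =>
        intro i hi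
        have hBsum : B.mulVec (∑ l : F, g l • v (l : ℕ)) =
            ∑ l : F, g l • B.mulVec (v (l : ℕ)) := by
          have := map_sum B.mulVecLin (fun l : F => g l • v (l : ℕ)) Finset.univ
          simp only [_root_.map_smul, Matrix.mulVecLin_apply] at this
          simpa using this
        have h0 : ∑ l : F, g l * B.mulVec (v (l : ℕ)) (mm i) = 0 := by
          have := congrFun (congrArg B.mulVec hgv) (mm i)
          rw [hBsum] at this
          rw [Matrix.mulVec_zero] at this
          rw [Finset.sum_apply] at this
          simpa using this
        have hsingle : ∑ l : F, g l * B.mulVec (v (l : ℕ)) (mm i) =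
            g i * B.mulVec (v (i : ℕ)) (mm i) := by
          refine Finset.sum_eq_single i ?_ (by simp)
          intro l _ hli
          rcases lt_trichotomy (l : ℕ) N with h | h | h
          · rw [ih (l : ℕ) h l rfl, zero_mul]
          · exact absurd (Subtype.ext (h.trans hi.symm)) hli
          · rw [hzero i i.2 l l.2 (by omega), mul_zero]
        rw [hsingle] at h0
        exact (mul_eq_zero.mp h0).resolve_right (ne_of_gt (hpos i i.2))
    intro i
    exact key (i : ℕ) i rfl
  have hcard := hli.fintype_card_le_finrank
  simpa using hcard

/-- Theorem 1: The number of steepest-descent augmentations needed to solve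
`min {cᵀx : x ∈ P}` is at most `dim P` times the number of distinct steepness values
`cᵀg / ‖B g‖₁` over all circuits `g` of `P`. -/
theorem steepest_descent_augmentation_bound
    (n mA mB : ℕ) (A : Matrix (Fin mA) (Fin n) ℝ) (B : Matrix (Fin mB) (Fin n) ℝ)
    (b : Fin mA → ℝ) (d : Fin mB → ℝ) (c : Fin n → ℝ)
    (P : Set (Fin n → ℝ))
    (hP : P = {x | A.mulVec x = b ∧ ∀ i, B.mulVec x i ≤ d i})
    (S : Set ℝ)
    (hS : S = {s : ℝ | ∃ g : Fin n → ℝ, IsCircuit A B g ∧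
      s = c ⬝ᵥ g / (∑ i, |B.mulVec g i|)})
    (hSfin : S.Finite)
    (k : ℕ) (x : ℕ → (Fin n → ℝ)) (y : ℕ → (Fin n → ℝ)) (α : ℕ → ℝ)
    (hxP : ∀ i ≤ k, x i ∈ P)
    (hsd : ∀ i < k, IsSteepestDescentDirection P B c (x i) (y i))
    (hcy : ∀ i < k, c ⬝ᵥ y i < 0)
    (hα : ∀ i < k, 0 < α i)
    (hstep : ∀ i < k, x (i + 1) = x i + α i • y i)
    (hmax : ∀ i < k, ∀ α' : ℝ, α i < α' → x i + α' • y i ∉ P) :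
    k ≤ Module.finrank ℝ (affineSpan ℝ P).direction * S.ncard := by
  classical
  rcases Nat.eq_zero_or_pos k with hk0 | hk0
  · rw [hk0]; exact Nat.zero_le _
  -- a default coordinate
  obtain ⟨m0, _⟩ := Function.ne_iff.mp (hsd 0 hk0).2.1
  set st : ℕ → ℝ := fun l => c ⬝ᵥ y l / ∑ m, |B.mulVec (y l) m| with hstdef
  set D := Module.finrank ℝ (affineSpan ℝ P).direction with hDdef
  -- tight coordinates
  have htight := exists_tight hP hxP hsd hα hstep hmax
  have hchoice : ∀ i : ℕ, ∃ m : Fin mB,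
      i < k → (0 < B.mulVec (y i) m ∧ B.mulVec (x (i+1)) m = d m) := by
    intro i
    by_cases hik : i < k
    · obtain ⟨m, hm⟩ := htight i hik
      exact ⟨m, fun _ => hm⟩
    · exact ⟨m0, fun h => absurd h hik⟩
  choose mm hmm using hchoice
  -- the image of steepness values
  set T := (Finset.range k).image st with hTdef
  -- each fiber has size at most D
  have hfib : ∀ v ∈ T, ((Finset.range k).filter (fun i => st i = v)).card ≤ D := by
    intro v hv
    set F := (Finset.range k).filter (fun i => st i = v) with hFdef
    have hFk : ∀ i ∈ F, i < k := by
      intro i hi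
      exact Finset.mem_range.mp (Finset.mem_filter.mp hi).1
    have hFst : ∀ i ∈ F, st i = v := fun i hi => (Finset.mem_filter.mp hi).2
    refine phase_card_le (B := B) P F y mm ?_ ?_ ?_
    · -- directions in the affine span
      intro i hi
      have hik := hFk i hi
      have hxi := (subset_affineSpan ℝ P) (hxP i (le_of_lt hik))
      have hxi1 := (subset_affineSpan ℝ P) (hxP (i+1) hik)
      have hsub : x (i+1) - x i ∈ (affineSpan ℝ P).direction := by
        have := AffineSubspace.vsub_mem_direction hxi1 hxi
        simpa [vsub_eq_sub] using this
      have hyi : y i = (α i)⁻¹ • (x (i+1) - x i) := by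
        have h1 : x (i+1) - x i = α i • y i := by rw [hstep i hik]; abel
        rw [h1, smul_smul, inv_mul_cancel₀ (ne_of_gt (hα i hik)), one_smul]
      rw [hyi]
      exact Submodule.smul_mem _ _ hsub
    · intro i hi
      exact (hmm i (hFk i hi)).1
    · -- triangular structure
      intro i hi l hl hil
      have hik := hFk i hi
      have hlk := hFk l hl
      set M := mm i with hMdef
      have hconst : ∀ p, i ≤ p → p ≤ l → st p = st i := by
        intro p hp1 hp2
        have h1 : st i ≤ st p := st_mono hP hxP hsd hcy hα hstep i p hp1
          (lt_of_le_of_lt hp2 hlk)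
        have h2 : st p ≤ st l := st_mono hP hxP hsd hcy hα hstep p l hp2 hlk
        have h3 : st l = st i := by rw [hFst l hl, hFst i hi]
        linarith
      have hsign := window_conf hP hxP hsd hcy hα hstep (le_of_lt hil) hlk hconst
      have hnneg : ∀ p, i ≤ p → p ≤ l → 0 ≤ B.mulVec (y p) M :=
        fun p h1 h2 => hsign M i le_rfl (le_of_lt hil) p h1 h2 (hmm i hik).1
      have htightp : ∀ p, i + 1 ≤ p → p ≤ l → B.mulVec (x p) M = d M := by
        intro p hp1
        induction p, hp1 using Nat.le_induction with
        | base => intro _; exact (hmm i hik).2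
        | succ p hp ih =>
          intro hp2
          have hxp := ih (by omega)
          have hpk : p < k := by omega
          have hx1 : B.mulVec (x (p+1)) M = B.mulVec (x p) M + α p * B.mulVec (y p) M := by
            rw [hstep p hpk, Matrix.mulVec_add, Matrix.mulVec_smul]
            simp
          have hfe : B.mulVec (x (p+1)) M ≤ d M := by
            have := hxP (p+1) (by omega)
            rw [hP] at this
            exact this.2 M
          have hge : 0 ≤ α p * B.mulVec (y p) M :=
            mul_nonneg (le_of_lt (hα p hpk)) (hnneg p (by omega) (by omega))
          rw [hx1, hxp]
          rw [hx1, hxp] at hfe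
          linarith
      have hBxl : B.mulVec (x l) M = d M := htightp l (by omega) le_rfl
      have hx1 : B.mulVec (x (l+1)) M = B.mulVec (x l) M + α l * B.mulVec (y l) M := by
        rw [hstep l hlk, Matrix.mulVec_add, Matrix.mulVec_smul]
        simp
      have hfe : B.mulVec (x (l+1)) M ≤ d M := by
        have := hxP (l+1) (by omega)
        rw [hP] at this
        exact this.2 M
      have h1 : 0 ≤ B.mulVec (y l) M := hnneg l (le_of_lt hil) le_rfl
      have h2 : α l * B.mulVec (y l) M ≤ 0 := by
        rw [hx1, hBxl] at hfe
        linarith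
      have h3 : B.mulVec (y l) M ≤ 0 := by
        by_contra hcc
        push_neg at hcc
        nlinarith [hα l hlk]
      linarith
  -- counting
  have hcount : k = ∑ v ∈ T, ((Finset.range k).filter (fun i => st i = v)).card := by
    have h := Finset.card_eq_sum_card_fiberwise (f := st) (s := Finset.range k) (t := T)
      (fun i hi => Finset.mem_image_of_mem st hi)
    rwa [Finset.card_range] at h
  have hk1 : k ≤ T.card * D := by
    rw [hcount]
    calc ∑ v ∈ T, ((Finset.range k).filter (fun i => st i = v)).card ≤ ∑ v ∈ T, D :=
      Finset.sum_le_sum hfib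
    _ = T.card * D := by rw [Finset.sum_const, smul_eq_mul]
  have hT : T.card ≤ S.ncard := by
    have hsub : T ⊆ hSfin.toFinset := by
      intro v hv
      obtain ⟨i, hi, hiv⟩ := Finset.mem_image.mp hv
      rw [Set.Finite.mem_toFinset]
      rw [← hiv]
      exact st_mem_S hP hS hSfin hxP hsd (Finset.mem_range.mp hi)
    calc T.card ≤ hSfin.toFinset.card := Finset.card_le_card hsub
    _ = S.ncard := (Set.ncard_eq_toFinset_card S hSfin).symm
  calc k ≤ T.card * D := hk1
  _ ≤ S.ncard * D := Nat.mul_le_mul_right D hT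
  _ = D * S.ncard := Nat.mul_comm _ _
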